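/- Let 0 < α < 1, t > 0, λ ≥ 0, and let h : [0,t] → ℝ be continuously differentiable with h(0) = 0. Then ∫₀ᵗ s^{α−1} E_{α,α}(−λ s^α) h(t−s) ds = ∫₀ᵗ s^{α} E_{α,1+α}(−λ s^α) h′(t−s) ds. -/

import Mathlib

open MeasureTheory

/-- The Gamma function dominates the factorial of `⌊y⌋ - 1` for `y ≥ 2`. -/
lemma gamma_ge_floor_factorial {y : ℝ} (hy : 2 ≤ y) :
    ((⌊y⌋₊ - 1).factorial : ℝ) ≤ Real.Gamma y := by
  have h2 : (2:ℕ) ≤ ⌊y⌋₊ := Nat.le_floor (by exact_mod_cast hy)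
  have hfl : (⌊y⌋₊ : ℝ) ≤ y := Nat.floor_le (by linarith)
  have h2r : (2:ℝ) ≤ (⌊y⌋₊ : ℝ) := by exact_mod_cast h2
  have hmono : Real.Gamma (⌊y⌋₊ : ℝ) ≤ Real.Gamma y :=
    Real.Gamma_strictMonoOn_Ici.monotoneOn (Set.mem_Ici.2 h2r)
      (Set.mem_Ici.2 (le_trans h2r hfl)) hfl
  refine le_trans (le_of_eq ?_) hmono
  have h1 : ((⌊y⌋₊ - 1 : ℕ) : ℝ) + 1 = (⌊y⌋₊ : ℝ) := by
    have : 1 ≤ ⌊y⌋₊ := le_trans (by norm_num) h2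
    push_cast [Nat.cast_sub this]
    ring
  rw [← h1, Real.Gamma_nat_eq_factorial]

/-- Key summability estimate: `q^k / Γ(αk + δ)` is summable. -/
lemma summable_gamma_aux (α δ q : ℝ) (hα : 0 < α) (hδ : 0 < δ) (hq : 0 ≤ q) :
    Summable (fun k : ℕ => q ^ k / Real.Gamma (α * k + δ)) := by
  set N : ℕ := ⌈2 / α⌉₊ + 1 with hNdef
  have hN0 : 0 < N := Nat.succ_pos _
  haveI : NeZero N := ⟨hN0.ne'⟩
  have hαN : 2 ≤ α * N := by
    have h1 : 2 / α ≤ (⌈2 / α⌉₊ : ℝ) := Nat.le_ceil _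
    have h2 : (⌈2 / α⌉₊ : ℝ) ≤ N := by push_cast [hNdef]; linarith
    have := (div_le_iff₀ hα).mp (le_trans h1 h2)
    linarith [this]
  set Q : ℝ := (max 1 q) ^ N with hQdef
  have hQ1 : (1:ℝ) ≤ max 1 q := le_max_left _ _
  have hQ0 : (0:ℝ) ≤ Q := by positivity
  set a : ℕ → ℝ := fun j => Q * (Q ^ j / (j.factorial : ℝ)) with hadef
  have ha : Summable a := (Real.summable_pow_div_factorial Q).mul_left Q
  have ha0 : ∀ j, 0 ≤ a j := fun j => by
    have : (0:ℝ) < j.factorial := by exact_mod_cast j.factorial_pos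
    positivity
  have hprod : Summable (fun p : ℕ × Fin N => a p.1) := by
    rw [summable_prod_of_nonneg (fun p => ha0 p.1)]
    refine ⟨fun x => summable_of_finite_support (Set.toFinite _), ?_⟩
    have : (fun x : ℕ => ∑' _ : Fin N, a x) = fun x => (N : ℝ) * a x := by
      funext x
      rw [tsum_const]
      simp [nsmul_eq_mul]
    rw [this]
    exact ha.mul_left _
  have hb : Summable (fun k : ℕ => a (k / N)) :=
    ((Nat.divModEquiv N).summable_iff (f := fun p : ℕ × Fin N => a p.1)).mpr hprod
  rw [← summable_nat_add_iff N]
  simp only [Nat.cast_add]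
  apply Summable.of_nonneg_of_le (g := fun m => q ^ (m + N) / Real.Gamma (α * ((m:ℝ) + (N:ℝ)) + δ))
    (f := fun m => a ((m + N) / N))
  · intro m
    have hg : 0 < Real.Gamma (α * ((m:ℝ) + (N:ℝ)) + δ) := Real.Gamma_pos_of_pos (by positivity)
    positivity
  · intro m
    have hcast : α * ((m:ℝ) + (N:ℝ)) + δ = α * ((m + N : ℕ) : ℝ) + δ := by push_cast; ring
    rw [hcast]
    set k : ℕ := m + N with hk
    set j : ℕ := k / N with hj
    have hj1 : 1 ≤ j := Nat.one_le_div_iff hN0 |>.mpr (by omega)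
    have hkj : (j : ℝ) * N ≤ (k : ℝ) := by
      exact_mod_cast Nat.cast_le.mpr (Nat.div_mul_le_self k N)
    have hαk : (2:ℝ) * j ≤ α * k := by
      calc (2:ℝ) * j ≤ (α * N) * j := by nlinarith [hαN, (by positivity : (0:ℝ) ≤ (j:ℝ))]
        _ = α * ((j:ℝ) * N) := by ring
        _ ≤ α * k := by nlinarith [hα.le]
    have hy2 : (2:ℝ) ≤ α * k + δ := by
      have : (1:ℝ) ≤ (j:ℝ) := by exact_mod_cast hj1
      nlinarith
    have hfloor : j + 1 ≤ ⌊α * k + δ⌋₊ := by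
      apply Nat.le_floor
      push_cast
      have : (1:ℝ) ≤ (j:ℝ) := by exact_mod_cast hj1
      nlinarith
    have hgamma : (j.factorial : ℝ) ≤ Real.Gamma (α * k + δ) := by
      refine le_trans ?_ (gamma_ge_floor_factorial hy2)
      have hle : j ≤ ⌊α * k + δ⌋₊ - 1 := by omega
      exact_mod_cast Nat.factorial_le hle
    have hqk : q ^ k ≤ Q * Q ^ j := by
      have h1 : q ^ k ≤ (max 1 q) ^ k := pow_le_pow_left₀ hq (le_max_right _ _) k
      have h2 : (max 1 q) ^ k ≤ (max 1 q) ^ ((j + 1) * N) := by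
        apply pow_le_pow_right₀ hQ1
        have h4 := Nat.mod_lt k hN0
        have : k < (j + 1) * N := by
          calc k = N * j + k % N := by rw [hj]; exact (Nat.div_add_mod k N).symm
            _ < N * j + N := Nat.add_lt_add_left h4 _
            _ = (j + 1) * N := by ring
        exact this.le
      calc q ^ k ≤ (max 1 q) ^ ((j+1)*N) := le_trans h1 h2
        _ = Q ^ (j + 1) := by rw [hQdef, ← pow_mul, Nat.mul_comm]
        _ = Q * Q ^ j := by rw [pow_succ]; ring
    have hgpos : 0 < Real.Gamma (α * k + δ) := Real.Gamma_pos_of_pos (by positivity)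
    have hfac : (0:ℝ) < j.factorial := by exact_mod_cast j.factorial_pos
    rw [div_le_iff₀ hgpos]
    calc q ^ k ≤ Q * Q ^ j := hqk
      _ = a j * (j.factorial : ℝ) := by
          simp only [hadef]
          field_simp
      _ ≤ a j * Real.Gamma (α * k + δ) := by
          have := ha0 j
          nlinarith
  · exact hb.comp_injective (add_left_injective N)

/-- Integrability of `s^r * g (t - s)` on `(0, t]`. -/
lemma integrableOn_rpow_mul (t : ℝ) (ht : 0 < t) (r : ℝ) (hr : -1 < r) (g : ℝ → ℝ) (C : ℝ)
    (hg : ContinuousOn g (Set.Icc 0 t)) (hC : ∀ x ∈ Set.Icc (0:ℝ) t, ‖g x‖ ≤ C) :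
    IntegrableOn (fun s => s ^ r * g (t - s)) (Set.Ioc 0 t) := by
  have hbase : IntegrableOn (fun s : ℝ => s ^ r) (Set.Ioc 0 t) :=
    (intervalIntegrable_iff_integrableOn_Ioc_of_le ht.le).mp
      (intervalIntegral.intervalIntegrable_rpow' hr)
  have hmeas : AEStronglyMeasurable (fun s => s ^ r * g (t - s))
      (volume.restrict (Set.Ioc 0 t)) := by
    apply ContinuousOn.aestronglyMeasurable _ measurableSet_Ioc
    refine ContinuousOn.mul ?_ ?_
    · intro s hs
      exact (Real.continuousAt_rpow_const s r (Or.inl hs.1.ne')).continuousWithinAt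
    · apply hg.comp ((continuous_const.sub continuous_id).continuousOn)
      intro s hs
      exact ⟨by simp; linarith [hs.2], by simp; linarith [hs.1.le]⟩
  refine Integrable.mono' (hbase.const_mul C) hmeas ?_
  rw [ae_restrict_iff' measurableSet_Ioc]
  filter_upwards with s hs
  have hs0 : 0 < s := hs.1
  have hsr : 0 ≤ s ^ r := Real.rpow_nonneg hs0.le _
  have hts : t - s ∈ Set.Icc (0:ℝ) t := ⟨by linarith [hs.2], by linarith [hs.1]⟩
  calc ‖s ^ r * g (t - s)‖ = s ^ r * ‖g (t - s)‖ := by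
        rw [norm_mul, Real.norm_of_nonneg hsr]
    _ ≤ s ^ r * C := by nlinarith [hC _ hts, norm_nonneg (g (t-s))]
    _ = C * s ^ r := by ring

/-- Value of `∫_{(0,t)} s^r ds`. -/
lemma integral_Ioo_rpow (t : ℝ) (ht : 0 < t) (r : ℝ) (hr : -1 < r) :
    ∫ s in Set.Ioo (0:ℝ) t, s ^ r = t ^ (r+1) / (r+1) := by
  have h1 := intervalIntegral.integral_of_le (a := 0) (b := t) (f := fun x : ℝ => x ^ r)
    (μ := volume) ht.le
  rw [← integral_Ioc_eq_integral_Ioo, ← h1,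
    integral_rpow (Or.inl hr), Real.zero_rpow (by linarith), sub_zero]

/-- Single-monomial integration by parts. -/
lemma ibp_term (t r : ℝ) (ht : 0 < t) (hr : 0 < r) (h h' : ℝ → ℝ)
    (hd : ∀ s ∈ Set.Icc (0:ℝ) t, HasDerivAt h (h' s) s)
    (hcont : ContinuousOn h' (Set.Icc 0 t)) (h0 : h 0 = 0) :
    ∫ s in Set.Ioo (0:ℝ) t, s ^ (r-1) * h (t-s)
      = ∫ s in Set.Ioo (0:ℝ) t, r⁻¹ * (s ^ r * h' (t-s)) := by
  have hrne : r ≠ 0 := hr.ne'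
  have hhc : ContinuousOn h (Set.Icc 0 t) := fun s hs => (hd s hs).continuousAt.continuousWithinAt
  obtain ⟨M, hM⟩ := isCompact_Icc.exists_bound_of_continuousOn hhc
  obtain ⟨M', hM'⟩ := isCompact_Icc.exists_bound_of_continuousOn hcont
  have hmaps : ∀ s ∈ Set.Icc (0:ℝ) t, t - s ∈ Set.Icc (0:ℝ) t := by
    intro s hs
    exact ⟨by linarith [hs.2], by linarith [hs.1]⟩
  have hH : ContinuousOn (fun s => h (t-s)) (Set.Icc 0 t) :=
    hhc.comp ((continuous_const.sub continuous_id).continuousOn) hmaps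
  have hcrpow : Continuous fun s : ℝ => s ^ r := by
    rw [continuous_iff_continuousAt]; intro x
    exact Real.continuousAt_rpow_const x r (Or.inr hr.le)
  set Φ : ℝ → ℝ := fun s => r⁻¹ * s ^ r * h (t - s) with hΦ
  have hΦc : ContinuousOn Φ (Set.Icc 0 t) :=
    ((continuous_const.mul hcrpow).continuousOn.mul hH)
  have hi1 : IntegrableOn (fun s => s ^ (r-1) * h (t-s)) (Set.Ioc 0 t) :=
    integrableOn_rpow_mul t ht (r-1) (by linarith) h M hhc hM
  have hi2' : IntegrableOn (fun s => s ^ r * h' (t-s)) (Set.Ioc 0 t) :=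
    integrableOn_rpow_mul t ht r (by linarith) h' M' hcont hM'
  have hψint : IntervalIntegrable
      (fun s => s ^ (r-1) * h (t-s) - r⁻¹ * (s ^ r * h' (t-s))) volume 0 t := by
    rw [intervalIntegrable_iff_integrableOn_Ioc_of_le ht.le]
    exact hi1.sub (hi2'.const_mul r⁻¹)
  have hΦd : ∀ x ∈ Set.Ioo (0:ℝ) t,
      HasDerivAt Φ (x ^ (r-1) * h (t-x) - r⁻¹ * (x ^ r * h' (t-x))) x := by
    intro x hx
    have hx0 : x ≠ 0 := ne_of_gt hx.1
    have hdr : HasDerivAt (fun s:ℝ => r⁻¹ * s ^ r) (r⁻¹ * (r * x ^ (r-1))) x :=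
      (Real.hasDerivAt_rpow_const (Or.inl hx0)).const_mul r⁻¹
    have hdh : HasDerivAt (fun s => h (t - s)) (-h' (t - x)) x := by
      have h1 : HasDerivAt (fun s:ℝ => t - s) (-1) x := (hasDerivAt_id x).const_sub t
      have h2 := (hd (t-x) ⟨by linarith [hx.2], by linarith [hx.1]⟩).comp x h1
      simpa [Function.comp_def] using h2
    have h3 := hdr.mul hdh
    refine h3.congr_deriv ?_
    rw [inv_mul_cancel_left₀ hrne]
    ring
  have hFTC := intervalIntegral.integral_eq_sub_of_hasDeriv_right_of_le ht.le hΦc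
      (fun x hx => (hΦd x hx).hasDerivWithinAt) hψint
  have hends : Φ t - Φ 0 = 0 := by
    simp [hΦ, h0, Real.zero_rpow hrne, sub_self]
  have hIoc := intervalIntegral.integral_of_le (μ := volume) (a := (0:ℝ)) (b := t)
      (f := fun s => s ^ (r-1) * h (t-s) - r⁻¹ * (s ^ r * h' (t-s))) ht.le
  have hzero : ∫ s in Set.Ioo (0:ℝ) t,
      (s ^ (r-1) * h (t-s) - r⁻¹ * (s ^ r * h' (t-s))) = 0 := by
    rw [← integral_Ioc_eq_integral_Ioo, ← hIoc, hFTC, hends]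
  have hi2'' : IntegrableOn (fun s => r⁻¹ * (s ^ r * h' (t-s))) (Set.Ioc 0 t) :=
    hi2'.const_mul r⁻¹
  rw [integral_sub (hi1.mono_set Set.Ioo_subset_Ioc_self)
      (hi2''.mono_set Set.Ioo_subset_Ioc_self), sub_eq_zero] at hzero
  exact hzero

/-- The generalized Mittag-Leffler function `E_{γ,δ}(x) = Σ_{k=0}^∞ x^k / Γ(γk + δ)`. -/
noncomputable def mittagLeffler (γ δ : ℝ) (x : ℝ) : ℝ :=
  ∑' k : ℕ, x ^ k / Real.Gamma (γ * k + δ)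

/-- Integration-by-parts identity (equation (v1n) in the proof of Theorem 1 of
the paper): for continuously differentiable `h` with `h(0) = 0`,
`∫₀ᵗ s^{α−1} E_{α,α}(−λ s^α) h(t−s) ds = ∫₀ᵗ s^α E_{α,1+α}(−λ s^α) h′(t−s) ds`. -/
theorem mittagLeffler_integration_by_parts (α lam t : ℝ)
    (hα0 : 0 < α) (hα1 : α < 1) (hlam : 0 ≤ lam) (ht : 0 < t)
    (h h' : ℝ → ℝ)
    (hd : ∀ s ∈ Set.Icc (0 : ℝ) t, HasDerivAt h (h' s) s)
    (hcont : ContinuousOn h' (Set.Icc 0 t))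
    (h0 : h 0 = 0) :
    ∫ s in Set.Ioo (0 : ℝ) t, s ^ (α - 1) * mittagLeffler α α (-lam * s ^ α) * h (t - s)
      = ∫ s in Set.Ioo (0 : ℝ) t,
          s ^ α * mittagLeffler α (1 + α) (-lam * s ^ α) * h' (t - s) := by
  have hhc : ContinuousOn h (Set.Icc 0 t) := fun s hs => (hd s hs).continuousAt.continuousWithinAt
  obtain ⟨M, hM⟩ := isCompact_Icc.exists_bound_of_continuousOn hhc
  obtain ⟨M', hM'⟩ := isCompact_Icc.exists_bound_of_continuousOn hcont
  have hM0 : 0 ≤ M := le_trans (norm_nonneg _) (hM 0 ⟨le_refl _, ht.le⟩)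
  have hM'0 : 0 ≤ M' := le_trans (norm_nonneg _) (hM' 0 ⟨le_refl _, ht.le⟩)
  set q : ℝ := lam * t ^ α with hqd
  have hq0 : 0 ≤ q := by positivity
  have hδ0 : (0:ℝ) < 1 + α := by linarith
  have hsum0 : Summable (fun k : ℕ => q ^ k / Real.Gamma (α * k + (1+α))) :=
    summable_gamma_aux α (1+α) q hα0 hδ0 hq0
  have hgpos : ∀ k : ℕ, 0 < Real.Gamma (α * k + α) :=
    fun k => Real.Gamma_pos_of_pos (by positivity)
  have hgpos1 : ∀ k : ℕ, 0 < Real.Gamma (α * k + (1+α)) :=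
    fun k => Real.Gamma_pos_of_pos (by positivity)
  set u : ℕ → ℝ → ℝ :=
    fun k s => (-lam) ^ k / Real.Gamma (α * k + α) * (s ^ (α * k + α - 1) * h (t - s)) with hud
  set v : ℕ → ℝ → ℝ :=
    fun k s => (-lam) ^ k / Real.Gamma (α * k + (1 + α)) * (s ^ (α * k + α) * h' (t - s))
    with hvd
  have hmaps : ∀ s ∈ Set.Icc (0:ℝ) t, t - s ∈ Set.Icc (0:ℝ) t := by
    intro s hs
    exact ⟨by linarith [hs.2], by linarith [hs.1]⟩
  have hH : ContinuousOn (fun s => h (t-s)) (Set.Icc 0 t) :=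
    hhc.comp ((continuous_const.sub continuous_id).continuousOn) hmaps
  have hH' : ContinuousOn (fun s => h' (t-s)) (Set.Icc 0 t) :=
    hcont.comp ((continuous_const.sub continuous_id).continuousOn) hmaps
  -- pointwise tsum expansions
  have hLpt : Set.EqOn (fun s => s ^ (α - 1) * mittagLeffler α α (-lam * s ^ α) * h (t - s))
      (fun s => ∑' k, u k s) (Set.Ioo 0 t) := by
    intro s hs
    have hs0 : 0 < s := hs.1
    simp only [mittagLeffler]
    rw [← tsum_mul_left, ← tsum_mul_right]
    refine tsum_congr fun k => ?_
    simp only [hud]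
    have hpow : (-lam * s ^ α) ^ k = (-lam) ^ k * s ^ (α * k) := by
      rw [mul_pow, ← Real.rpow_natCast (s ^ α) k, ← Real.rpow_mul hs0.le]
    have hmul : s ^ (α - 1) * s ^ (α * (k:ℝ)) = s ^ (α * k + α - 1) := by
      rw [← Real.rpow_add hs0]; congr 1; ring
    rw [hpow, ← hmul]
    ring
  have hRpt : Set.EqOn (fun s => s ^ α * mittagLeffler α (1 + α) (-lam * s ^ α) * h' (t - s))
      (fun s => ∑' k, v k s) (Set.Ioo 0 t) := by
    intro s hs
    have hs0 : 0 < s := hs.1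
    simp only [mittagLeffler]
    rw [← tsum_mul_left, ← tsum_mul_right]
    refine tsum_congr fun k => ?_
    simp only [hvd]
    have hpow : (-lam * s ^ α) ^ k = (-lam) ^ k * s ^ (α * k) := by
      rw [mul_pow, ← Real.rpow_natCast (s ^ α) k, ← Real.rpow_mul hs0.le]
    have hmul : s ^ α * s ^ (α * (k:ℝ)) = s ^ (α * k + α) := by
      rw [← Real.rpow_add hs0]; congr 1; ring
    rw [hpow, ← hmul]
    ring
  -- measurability
  have hmeasgen : ∀ (e : ℝ) (g : ℝ → ℝ), ContinuousOn (fun s => g (t - s)) (Set.Icc 0 t) →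
      ∀ c : ℝ, AEStronglyMeasurable (fun s => c * (s ^ e * g (t - s)))
        (volume.restrict (Set.Ioo (0:ℝ) t)) := by
    intro e g hg c
    apply ContinuousOn.aestronglyMeasurable _ measurableSet_Ioo
    apply ContinuousOn.mul continuousOn_const
    apply ContinuousOn.mul
    · intro s hs
      exact (Real.continuousAt_rpow_const s e (Or.inl hs.1.ne')).continuousWithinAt
    · exact hg.mono Set.Ioo_subset_Icc_self
  have hmeas_u : ∀ k : ℕ, AEStronglyMeasurable (u k) (volume.restrict (Set.Ioo (0:ℝ) t)) :=
    fun k => hmeasgen _ h hH _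
  have hmeas_v : ∀ k : ℕ, AEStronglyMeasurable (v k) (volume.restrict (Set.Ioo (0:ℝ) t)) :=
    fun k => hmeasgen _ h' hH' _
  -- integrability on Ioc
  have hint_u : ∀ k : ℕ, IntegrableOn (u k) (Set.Ioc 0 t) := fun k =>
    (integrableOn_rpow_mul t ht (α*k+α-1) (by nlinarith [mul_nonneg hα0.le (show (0:ℝ) ≤ (k:ℝ) from Nat.cast_nonneg k)]) h M hhc hM).const_mul _
  have hint_v : ∀ k : ℕ, IntegrableOn (v k) (Set.Ioc 0 t) := fun k =>
    (integrableOn_rpow_mul t ht (α*k+α) (by nlinarith [mul_nonneg hα0.le (show (0:ℝ) ≤ (k:ℝ) from Nat.cast_nonneg k)]) h' M' hcont hM').const_mul _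
    -- generic norm-integral bound
  have hnormb : ∀ (c e C : ℝ) (g : ℝ → ℝ), -1 < e → 0 ≤ C →
      ContinuousOn g (Set.Icc 0 t) → (∀ x ∈ Set.Icc (0:ℝ) t, ‖g x‖ ≤ C) →
      ∫ s in Set.Ioo (0:ℝ) t, ‖c * (s ^ e * g (t - s))‖ ≤ |c| * C * (t ^ (e+1) / (e+1)) := by
    intro c e C g he hC0 hg hC
    have hbase : IntegrableOn (fun s : ℝ => s ^ e) (Set.Ioo 0 t) :=
      ((intervalIntegrable_iff_integrableOn_Ioc_of_le ht.le).mp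
        (intervalIntegral.intervalIntegrable_rpow' he)).mono_set Set.Ioo_subset_Ioc_self
    have hif0 : IntegrableOn (fun s => c * (s ^ e * g (t - s))) (Set.Ioc 0 t) :=
      (integrableOn_rpow_mul t ht e he g C hg hC).const_mul c
    have hif : IntegrableOn (fun s => c * (s ^ e * g (t - s))) (Set.Ioo 0 t) :=
      hif0.mono_set Set.Ioo_subset_Ioc_self
    have hmono : ∫ s in Set.Ioo (0:ℝ) t, ‖c * (s ^ e * g (t - s))‖
        ≤ ∫ s in Set.Ioo (0:ℝ) t, |c| * C * s ^ e := by
      apply integral_mono_ae hif.norm (hbase.const_mul _)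
      filter_upwards [ae_restrict_mem measurableSet_Ioo] with s hs
      have hs0 : 0 < s := hs.1
      have hse : 0 ≤ s ^ e := Real.rpow_nonneg hs0.le _
      have hts : t - s ∈ Set.Icc (0:ℝ) t := ⟨by linarith [hs.2], by linarith [hs.1]⟩
      calc ‖c * (s ^ e * g (t - s))‖ = |c| * (s ^ e * |g (t - s)|) := by
            rw [Real.norm_eq_abs, abs_mul, abs_mul, abs_of_nonneg hse]
        _ ≤ |c| * (s ^ e * C) := by
            have h5 : |g (t-s)| ≤ C := by rw [← Real.norm_eq_abs]; exact hC _ hts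
            exact mul_le_mul_of_nonneg_left (mul_le_mul_of_nonneg_left h5 hse) (abs_nonneg c)
        _ = |c| * C * s ^ e := by ring
    refine le_trans hmono (le_of_eq ?_)
    rw [MeasureTheory.integral_const_mul, integral_Ioo_rpow t ht e he]
  -- bounds for u
  have hBu : ∀ k : ℕ, ∫ s in Set.Ioo (0:ℝ) t, ‖u k s‖
      ≤ (M * t ^ α) * (q ^ k / Real.Gamma (α * k + (1+α))) := by
    intro k
    have hk0 : (0:ℝ) ≤ (k:ℝ) := Nat.cast_nonneg k
    have he : -1 < α * (k:ℝ) + α - 1 := by nlinarith [mul_nonneg hα0.le hk0]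
    have h1 := hnormb ((-lam) ^ k / Real.Gamma (α * k + α)) (α * k + α - 1) M h he hM0 hhc hM
    refine le_trans h1 (le_of_eq ?_)
    have harg : α * (k:ℝ) + α - 1 + 1 = α * k + α := by ring
    rw [harg]
    have habs : |(-lam) ^ k / Real.Gamma (α * k + α)| = lam ^ k / Real.Gamma (α * k + α) := by
      rw [abs_div, abs_pow, abs_neg, abs_of_nonneg hlam, abs_of_pos (hgpos k)]
    rw [habs]
    have hg1 : Real.Gamma (α * (k:ℝ) + (1+α)) = (α * k + α) * Real.Gamma (α * k + α) := by
      have harg2 : α * (k:ℝ) + (1+α) = (α * k + α) + 1 := by ring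
      rw [harg2, Real.Gamma_add_one (by positivity : (α*(k:ℝ)+α) ≠ 0)]
    have htpow : t ^ (α * (k:ℝ) + α) = (t ^ α) ^ k * t ^ α := by
      rw [Real.rpow_add ht, ← Real.rpow_natCast (t ^ α) k, ← Real.rpow_mul ht.le]
    rw [hg1, htpow, hqd, mul_pow]
    have hne1 : Real.Gamma (α * (k:ℝ) + α) ≠ 0 := (hgpos k).ne'
    have hne2 : α * (k:ℝ) + α ≠ 0 := by positivity
    field_simp
  -- bounds for v
  have hBv : ∀ k : ℕ, ∫ s in Set.Ioo (0:ℝ) t, ‖v k s‖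
      ≤ (M' * t ^ (1+α)) * (q ^ k / Real.Gamma (α * k + (1+α))) := by
    intro k
    have hk0 : (0:ℝ) ≤ (k:ℝ) := Nat.cast_nonneg k
    have he : -1 < α * (k:ℝ) + α := by nlinarith [mul_nonneg hα0.le hk0]
    have h1 := hnormb ((-lam) ^ k / Real.Gamma (α * k + (1+α))) (α * k + α) M' h' he hM'0
      hcont hM'
    refine le_trans h1 ?_
    have habs : |(-lam) ^ k / Real.Gamma (α * k + (1+α))|
        = lam ^ k / Real.Gamma (α * k + (1+α)) := by
      rw [abs_div, abs_pow, abs_neg, abs_of_nonneg hlam, abs_of_pos (hgpos1 k)]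
    have hd1 : 1 ≤ α * (k:ℝ) + α + 1 := by nlinarith [mul_nonneg hα0.le hk0]
    have hX0 : 0 ≤ t ^ (α * (k:ℝ) + α + 1) := Real.rpow_nonneg ht.le _
    have hdiv : t ^ (α * (k:ℝ) + α + 1) / (α * (k:ℝ) + α + 1) ≤ t ^ (α * (k:ℝ) + α + 1) :=
      div_le_self hX0 hd1
    have step1 : |(-lam) ^ k / Real.Gamma (α * k + (1+α))| * M'
          * (t ^ (α * (k:ℝ) + α + 1) / (α * (k:ℝ) + α + 1))
        ≤ |(-lam) ^ k / Real.Gamma (α * k + (1+α))| * M' * t ^ (α * (k:ℝ) + α + 1) := by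
      have h6 : 0 ≤ |(-lam) ^ k / Real.Gamma (α * k + (1+α))| * M' :=
        mul_nonneg (abs_nonneg _) hM'0
      exact mul_le_mul_of_nonneg_left hdiv h6
    refine le_trans step1 (le_of_eq ?_)
    have htpow2 : t ^ (α * (k:ℝ) + α + 1) = (t ^ α) ^ k * t ^ (1+α) := by
      rw [show α * (k:ℝ) + α + 1 = α * (k:ℝ) + (1+α) by ring, Real.rpow_add ht,
        ← Real.rpow_natCast (t ^ α) k, ← Real.rpow_mul ht.le]
    rw [habs, htpow2, hqd, mul_pow]
    have hne1 : Real.Gamma (α * (k:ℝ) + (1+α)) ≠ 0 := (hgpos1 k).ne'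
    field_simp
  -- lintegral finiteness
  have hnn : ∀ (A : ℝ), 0 ≤ A → ∀ k : ℕ, 0 ≤ A * (q ^ k / Real.Gamma (α * k + (1+α))) := by
    intro A hA k
    exact mul_nonneg hA (div_nonneg (pow_nonneg hq0 k) (hgpos1 k).le)
  have hlint_u : ∑' k : ℕ, ∫⁻ s, ‖u k s‖₊ ∂(volume.restrict (Set.Ioo (0:ℝ) t)) ≠ ⊤ := by
    apply ne_top_of_le_ne_top
      (b := ∑' k : ℕ, ENNReal.ofReal ((M * t ^ α) * (q ^ k / Real.Gamma (α * k + (1+α)))))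
    · rw [← ENNReal.ofReal_tsum_of_nonneg (hnn _ (by positivity)) (hsum0.mul_left _)]
      exact ENNReal.ofReal_ne_top
    · apply ENNReal.tsum_le_tsum
      intro k
      simp only [← enorm_eq_nnnorm]
      rw [← ofReal_integral_norm_eq_lintegral_enorm ((hint_u k).mono_set Set.Ioo_subset_Ioc_self)]
      exact ENNReal.ofReal_le_ofReal (hBu k)
  have hlint_v : ∑' k : ℕ, ∫⁻ s, ‖v k s‖₊ ∂(volume.restrict (Set.Ioo (0:ℝ) t)) ≠ ⊤ := by
    apply ne_top_of_le_ne_top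
      (b := ∑' k : ℕ, ENNReal.ofReal ((M' * t ^ (1+α)) * (q ^ k / Real.Gamma (α * k + (1+α)))))
    · rw [← ENNReal.ofReal_tsum_of_nonneg (hnn _ (by positivity)) (hsum0.mul_left _)]
      exact ENNReal.ofReal_ne_top
    · apply ENNReal.tsum_le_tsum
      intro k
      simp only [← enorm_eq_nnnorm]
      rw [← ofReal_integral_norm_eq_lintegral_enorm ((hint_v k).mono_set Set.Ioo_subset_Ioc_self)]
      exact ENNReal.ofReal_le_ofReal (hBv k)
  -- per-term integration by parts
  have hterm : ∀ k : ℕ, (∫ s in Set.Ioo (0:ℝ) t, u k s) = ∫ s in Set.Ioo (0:ℝ) t, v k s := by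
    intro k
    have hr0 : 0 < α * (k:ℝ) + α := by positivity
    have hibp := ibp_term t (α * k + α) ht hr0 h h' hd hcont h0
    simp only [hud, hvd]
    rw [MeasureTheory.integral_const_mul, MeasureTheory.integral_const_mul, hibp,
      MeasureTheory.integral_const_mul]
    have hg1 : Real.Gamma (α * (k:ℝ) + (1+α)) = (α * k + α) * Real.Gamma (α * k + α) := by
      have harg2 : α * (k:ℝ) + (1+α) = (α * k + α) + 1 := by ring
      rw [harg2, Real.Gamma_add_one hr0.ne']
    rw [hg1]
    have hne1 : Real.Gamma (α * (k:ℝ) + α) ≠ 0 := (hgpos k).ne'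
    have key : ∀ (c G I : ℝ), G ≠ 0 → (α * (k:ℝ) + α) ≠ 0 →
        c / G * ((α * (k:ℝ) + α)⁻¹ * I) = c / ((α * (k:ℝ) + α) * G) * I := by
      intro c G I hG hr
      rw [div_eq_mul_inv, div_eq_mul_inv, mul_inv]
      ring
    exact key _ _ _ hne1 hr0.ne'
  -- conclusion
  calc (∫ s in Set.Ioo (0:ℝ) t, s ^ (α - 1) * mittagLeffler α α (-lam * s ^ α) * h (t - s))
      = ∫ s in Set.Ioo (0:ℝ) t, ∑' k : ℕ, u k s :=
        setIntegral_congr_fun measurableSet_Ioo hLpt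
    _ = ∑' k : ℕ, ∫ s in Set.Ioo (0:ℝ) t, u k s := integral_tsum hmeas_u hlint_u
    _ = ∑' k : ℕ, ∫ s in Set.Ioo (0:ℝ) t, v k s := tsum_congr hterm
    _ = ∫ s in Set.Ioo (0:ℝ) t, ∑' k : ℕ, v k s := (integral_tsum hmeas_v hlint_v).symm
    _ = ∫ s in Set.Ioo (0:ℝ) t, s ^ α * mittagLeffler α (1 + α) (-lam * s ^ α) * h' (t - s) :=
        setIntegral_congr_fun measurableSet_Ioo hRpt.symm
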